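/- Let 𝔽 be a finite field with q elements, F ∈ 𝔽^{M×K} of the block form [I_M | F̃] with full row rank, G ∈ 𝔽^{N×K}, and r = rank([F; G]). Let V ∈ 𝔽^{(K−r)×(K−M)} be such that the stacked matrix [F; G; [0_{(K−r)×M} | V]] has rank K, and let V⊥ ∈ 𝔽^{(K−M)×(r−M)} have full column rank r−M and satisfy V·V⊥ = 0. On the product space of all pairs (W, S) with W a K×L matrix and S an (r−M)×L matrix over 𝔽, equipped with the uniform probability measure, define N = V⊥·S and messages X with rows 1 through M equal to the first M rows of W minus F̃·N, and rows M+1 through K equal to the last K−M rows of W plus N. Then the conditional entropy of the message tuple given F·W is maximal: H[(X_1, …, X_K) | F·W] = (K − M) · L · log q. -/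

import Mathlib

/-!
Shannon entropy machinery for finitely-supported random variables on a finite
probability space, and the definition of a vector-linear secure aggregation
scheme (Yuan–Sun, "Vector Linear Secure Aggregation").
-/

open scoped BigOperators Classical

namespace SecAgg

noncomputable section

variable {Ω : Type*} [Fintype Ω]

/-- Probability that the random variable `X` takes the value `a`, under the
probability mass function `p` on the finite sample space `Ω`. -/
def pr {α : Type*} (p : Ω → ℝ) (X : Ω → α) (a : α) : ℝ :=
  ∑ ω, if X ω = a then p ω else 0

/-- Shannon entropy (natural-log units) of a random variable `X` on a finite
probability space with mass function `p`. -/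
def H {α : Type*} (p : Ω → ℝ) (X : Ω → α) : ℝ :=
  ∑ a ∈ Finset.univ.image X, Real.negMulLog (pr p X a)

/-- Conditional Shannon entropy `H[X | Y] = H[(X,Y)] - H[Y]`. -/
def Hc {α β : Type*} (p : Ω → ℝ) (X : Ω → α) (Y : Ω → β) : ℝ :=
  H p (fun ω => (X ω, Y ω)) - H p Y

/-- Mutual information `I[X : Y] = H[X] + H[Y] - H[(X,Y)]`. -/
def MI {α β : Type*} (p : Ω → ℝ) (X : Ω → α) (Y : Ω → β) : ℝ :=
  H p X + H p Y - H p (fun ω => (X ω, Y ω))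

/-- Conditional mutual information
`I[X : Y | Z] = H[(X,Z)] + H[(Y,Z)] - H[(X,Y,Z)] - H[Z]`. -/
def CMI {α β γ : Type*} (p : Ω → ℝ) (X : Ω → α) (Y : Ω → β) (Z : Ω → γ) : ℝ :=
  H p (fun ω => (X ω, Z ω)) + H p (fun ω => (Y ω, Z ω))
    - H p (fun ω => (X ω, Y ω, Z ω)) - H p Z

/-- A secure aggregation scheme for the pair of linear maps `(F, G)`:
`K` users, inputs of length `L` over the finite field `𝔽`; the server must
learn `F * W` and nothing more about `G * W`.  `κ k` is the alphabet of
user `k`'s key, `σ` the alphabet of the source key, `χ k` the alphabet of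
user `k`'s message. -/
structure Scheme (𝔽 : Type) [Field 𝔽] [Fintype 𝔽] (L : ℕ) {K M N : ℕ}
    (F : Matrix (Fin M) (Fin K) 𝔽) (G : Matrix (Fin N) (Fin K) 𝔽)
    (Ω : Type) [Fintype Ω] (κ : Fin K → Type) (σ : Type) (χ : Fin K → Type) where
  /-- probability mass function on the sample space -/
  p : Ω → ℝ
  p_nonneg : ∀ ω, 0 ≤ p ω
  p_sum_one : ∑ ω, p ω = 1
  /-- the input, a `K × L` matrix of field elements (row `k` is user `k`'s input) -/
  W : Ω → Matrix (Fin K) (Fin L) 𝔽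
  /-- user `k`'s key -/
  Z : ∀ k : Fin K, Ω → κ k
  /-- the source key -/
  Zsrc : Ω → σ
  /-- user `k`'s message -/
  X : ∀ k : Fin K, Ω → χ k
  /-- the input is uniformly distributed -/
  W_unif : ∀ w : Matrix (Fin K) (Fin L) 𝔽,
    pr p W w = (Fintype.card (Matrix (Fin K) (Fin L) 𝔽) : ℝ)⁻¹
  /-- the input is independent of all keys (including the source key) -/
  indep : ∀ (w : Matrix (Fin K) (Fin L) 𝔽) (z : (∀ k, κ k) × σ),
    pr p (fun ω => (W ω, ((fun k => Z k ω), Zsrc ω))) (w, z)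
      = pr p W w * pr p (fun ω => ((fun k => Z k ω), Zsrc ω)) z
  /-- each key is a deterministic function of the source key -/
  Z_det : ∀ k : Fin K, ∃ f : σ → κ k, ∀ ω, Z k ω = f (Zsrc ω)
  /-- each message is a deterministic function of (own input row, own key) -/
  X_det : ∀ k : Fin K, ∃ f : (Fin L → 𝔽) → κ k → χ k, ∀ ω, X k ω = f (W ω k) (Z k ω)
  /-- correctness: `F ⬝ W` is determined by the messages -/
  correct : Hc p (fun ω => F * W ω) (fun ω k => X k ω) = 0
  /-- security: the messages reveal nothing about `G ⬝ W` beyond `F ⬝ W` -/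
  secure : CMI p (fun ω => G * W ω) (fun ω k => X k ω) (fun ω => F * W ω) = 0

end

end SecAgg
namespace SecAgg


noncomputable section
variable {Ω : Type*} [Fintype Ω]

lemma H_comp_inj {α β : Type*} (p : Ω → ℝ) (X : Ω → α) (φ : α → β)
    (hφ : Function.Injective φ) :
    H p (fun ω => φ (X ω)) = H p X := by
  have himg : Finset.univ.image (fun ω => φ (X ω)) = (Finset.univ.image X).image φ := by
    rw [Finset.image_image]; rfl
  have hpr : ∀ a : α, pr p (fun ω => φ (X ω)) (φ a) = pr p X a := by
    intro a
    unfold pr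
    refine Finset.sum_congr rfl fun ω _ => ?_
    simp [hφ.eq_iff]
  unfold H
  rw [himg, Finset.sum_image (fun a _ b _ h => hφ h)]
  exact Finset.sum_congr rfl fun a _ => by rw [hpr]

lemma H_uniform_of_equiv {α γ : Type*} [Fintype α] [Fintype γ] [Nonempty α] [Nonempty γ]
    (e : Ω ≃ α × γ) (X : Ω → α) (hX : ∀ ω, X ω = (e ω).1) :
    H (fun _ : Ω => (Fintype.card Ω : ℝ)⁻¹) X = Real.log (Fintype.card α) := by
  have hcard : (Fintype.card Ω : ℝ) = (Fintype.card α : ℝ) * (Fintype.card γ : ℝ) := by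
    rw [Fintype.card_congr e, Fintype.card_prod]; push_cast; ring
  have hΩne : Nonempty Ω := ⟨e.symm (Classical.arbitrary _, Classical.arbitrary _)⟩
  have hα0 : (Fintype.card α : ℝ) ≠ 0 := by positivity
  have hγ0 : (Fintype.card γ : ℝ) ≠ 0 := by positivity
  have hsurj : Function.Surjective X := by
    intro a
    refine ⟨e.symm (a, Classical.arbitrary γ), ?_⟩
    rw [hX, e.apply_symm_apply]
  have hpr : ∀ a : α, pr (fun _ : Ω => (Fintype.card Ω : ℝ)⁻¹) X a
      = ((Fintype.card α : ℝ))⁻¹ := by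
    intro a
    unfold pr
    have : ∀ ω : Ω, (if X ω = a then (Fintype.card Ω : ℝ)⁻¹ else 0)
        = (fun z : α × γ => if z.1 = a then (Fintype.card Ω : ℝ)⁻¹ else 0) (e ω) := by
      intro ω; simp [hX]
    rw [Finset.sum_congr rfl fun ω _ => this ω,
      Equiv.sum_comp e (fun z : α × γ => if z.1 = a then (Fintype.card Ω : ℝ)⁻¹ else 0)]
    rw [Fintype.sum_prod_type, Finset.sum_comm]
    simp only [Finset.sum_ite_eq', Finset.mem_univ, if_true, Finset.sum_const,
      Finset.card_univ, nsmul_eq_mul, hcard]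
    field_simp
  have himg : Finset.univ.image X = Finset.univ :=
    Finset.image_univ_of_surjective hsurj
  unfold H
  rw [himg]
  rw [Finset.sum_congr rfl fun a _ => by rw [hpr a]]
  rw [Finset.sum_const, Finset.card_univ, nsmul_eq_mul]
  rw [Real.negMulLog, Real.log_inv]
  field_simp

end

/-- The equiv witnessing that `X` together with `S` determines `(W, S)`. -/
noncomputable def eX {𝔽 : Type} [Field 𝔽] {M K' L rM : ℕ}
    (Ft : Matrix (Fin M) (Fin K') 𝔽) (Vp : Matrix (Fin K') (Fin rM) 𝔽) :
    (Matrix (Fin M ⊕ Fin K') (Fin L) 𝔽 × Matrix (Fin rM) (Fin L) 𝔽) ≃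
      (Matrix (Fin M ⊕ Fin K') (Fin L) 𝔽 × Matrix (Fin rM) (Fin L) 𝔽) where
  toFun ω := (Matrix.fromRows
      (ω.1.submatrix Sum.inl id - Ft * (Vp * ω.2))
      (ω.1.submatrix Sum.inr id + Vp * ω.2), ω.2)
  invFun z := (Matrix.fromRows
      (z.1.submatrix Sum.inl id + Ft * (Vp * z.2))
      (z.1.submatrix Sum.inr id - Vp * z.2), z.2)
  left_inv ω := by
    refine Prod.ext ?_ rfl
    ext (i | i) j <;>
      simp [Matrix.sub_apply, Matrix.add_apply, Matrix.submatrix_apply]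
  right_inv z := by
    refine Prod.ext ?_ rfl
    ext (i | i) j <;>
      simp [Matrix.sub_apply, Matrix.add_apply, Matrix.submatrix_apply]

/-- The equiv witnessing that `Y = W_top + Ft W_bot` together with `(W_bot, S)`
determines `(W, S)`. -/
noncomputable def eY {𝔽 : Type} [Field 𝔽] {M K' L rM : ℕ}
    (Ft : Matrix (Fin M) (Fin K') 𝔽) :
    (Matrix (Fin M ⊕ Fin K') (Fin L) 𝔽 × Matrix (Fin rM) (Fin L) 𝔽) ≃
      (Matrix (Fin M) (Fin L) 𝔽 × (Matrix (Fin K') (Fin L) 𝔽 × Matrix (Fin rM) (Fin L) 𝔽))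
      where
  toFun ω := (ω.1.submatrix Sum.inl id + Ft * ω.1.submatrix Sum.inr id,
      (ω.1.submatrix Sum.inr id, ω.2))
  invFun z := (Matrix.fromRows (z.1 - Ft * z.2.1) z.2.1, z.2.2)
  left_inv ω := by
    refine Prod.ext ?_ rfl
    ext (i | i) j <;>
      simp [Matrix.sub_apply, Matrix.add_apply, Matrix.submatrix_apply]
  right_inv z := by
    have h1 : ∀ (A : Matrix (Fin M) (Fin L) 𝔽) (B : Matrix (Fin K') (Fin L) 𝔽),
        (Matrix.fromRows A B).submatrix Sum.inl (id : Fin L → Fin L) = A := fun A B => rfl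
    have h2 : ∀ (A : Matrix (Fin M) (Fin L) 𝔽) (B : Matrix (Fin K') (Fin L) 𝔽),
        (Matrix.fromRows A B).submatrix Sum.inr (id : Fin L → Fin L) = B := fun A B => rfl
    refine Prod.ext ?_ (Prod.ext ?_ rfl)
    · show (Matrix.fromRows (z.1 - Ft * z.2.1) z.2.1).submatrix Sum.inl id
          + Ft * (Matrix.fromRows (z.1 - Ft * z.2.1) z.2.1).submatrix Sum.inr id = z.1
      rw [h1, h2, sub_add_cancel]
    · show (Matrix.fromRows (z.1 - Ft * z.2.1) z.2.1).submatrix Sum.inr id = z.2.1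
      rw [h2]

lemma card_mat {m n α : Type*} [Fintype m] [DecidableEq m] [Fintype n] [DecidableEq n]
    [Fintype α] :
    Fintype.card (Matrix m n α) = Fintype.card α ^ (Fintype.card n * Fintype.card m) := by
  have : Fintype.card (Matrix m n α) = Fintype.card (m → n → α) := rfl
  rw [this, Fintype.card_fun, Fintype.card_fun, ← pow_mul]

set_option maxHeartbeats 1000000 in
/-- **Maximal conditional message entropy of the achievable scheme.** Under the
same construction as the general achievable scheme, the conditional entropy of
the message tuple given `F·W` is maximal: `H[X | F·W] = (K − M) · L · log q`
(here `K − M = K'`). -/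
theorem achievable_scheme_cond_entropy_max
    {𝔽 : Type} [Field 𝔽] [Fintype 𝔽] {M K' N L r : ℕ}
    (Ft : Matrix (Fin M) (Fin K') 𝔽) (G : Matrix (Fin N) (Fin M ⊕ Fin K') 𝔽)
    (hr : r = (Matrix.fromRows (Matrix.fromCols 1 Ft) G).rank)
    (V : Matrix (Fin (M + K' - r)) (Fin K') 𝔽)
    (hV : (Matrix.fromRows (Matrix.fromRows (Matrix.fromCols 1 Ft) G)
        (Matrix.fromCols (0 : Matrix (Fin (M + K' - r)) (Fin M) 𝔽) V)).rank
          = M + K')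
    (Vp : Matrix (Fin K') (Fin (r - M)) 𝔽)
    (hVp : Vp.rank = r - M)
    (hVVp : V * Vp = 0) :
    Hc
      (fun _ : Matrix (Fin M ⊕ Fin K') (Fin L) 𝔽 × Matrix (Fin (r - M)) (Fin L) 𝔽 =>
        (Fintype.card
          (Matrix (Fin M ⊕ Fin K') (Fin L) 𝔽 × Matrix (Fin (r - M)) (Fin L) 𝔽) : ℝ)⁻¹)
      (fun ω => Matrix.fromRows
          (ω.1.submatrix Sum.inl id - Ft * (Vp * ω.2))
          (ω.1.submatrix Sum.inr id + Vp * ω.2))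
      (fun ω => (Matrix.fromCols 1 Ft) * ω.1)
      = (K' : ℝ) * L * Real.log (Fintype.card 𝔽) := by
  classical
  let Ω := Matrix (Fin M ⊕ Fin K') (Fin L) 𝔽 × Matrix (Fin (r - M)) (Fin L) 𝔽
  let p : Ω → ℝ := fun _ => (Fintype.card Ω : ℝ)⁻¹
  let X : Ω → Matrix (Fin M ⊕ Fin K') (Fin L) 𝔽 := fun ω => Matrix.fromRows
      (ω.1.submatrix Sum.inl id - Ft * (Vp * ω.2))
      (ω.1.submatrix Sum.inr id + Vp * ω.2)
  let Y : Ω → Matrix (Fin M) (Fin L) 𝔽 := fun ω => (Matrix.fromCols 1 Ft) * ω.1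
  have hsplit : ∀ A : Matrix (Fin M ⊕ Fin K') (Fin L) 𝔽,
      A = Matrix.fromRows (A.submatrix Sum.inl id) (A.submatrix Sum.inr id) := by
    intro A; ext (i | i) j <;> simp
  have hY' : ∀ ω : Ω, Y ω
      = ω.1.submatrix Sum.inl id + Ft * ω.1.submatrix Sum.inr id := by
    intro ω
    show Matrix.fromCols 1 Ft * ω.1 = _
    conv_lhs => rw [hsplit ω.1]
    erw [Matrix.fromCols_mul_fromRows, Matrix.one_mul]
  have hYX : ∀ ω : Ω, Y ω = Matrix.fromCols 1 Ft * X ω := by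
    intro ω
    show Y ω = Matrix.fromCols 1 Ft * Matrix.fromRows _ _
    erw [Matrix.fromCols_mul_fromRows, hY' ω]
    rw [Matrix.mul_sub, Matrix.mul_add]
    simp only [Matrix.one_mul]
    abel
  have hpair : H p (fun ω => (X ω, Y ω)) = H p X := by
    have h1 : (fun ω => (X ω, Y ω))
        = fun ω => ((fun x => (x, Matrix.fromCols 1 Ft * x)) (X ω)) := by
      funext ω; simp only [hYX ω]
    rw [h1]
    exact H_comp_inj p X (fun x => (x, Matrix.fromCols 1 Ft * x))
      (fun a b h => congrArg Prod.fst h)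
  have hHX : H p X = Real.log (Fintype.card (Matrix (Fin M ⊕ Fin K') (Fin L) 𝔽)) :=
    H_uniform_of_equiv (eX Ft Vp) X (fun ω => rfl)
  have hHY : H p Y = Real.log (Fintype.card (Matrix (Fin M) (Fin L) 𝔽)) :=
    H_uniform_of_equiv (eY Ft) Y (fun ω => hY' ω)
  show H p (fun ω => (X ω, Y ω)) - H p Y = _
  rw [hpair, hHX, hHY]
  rw [show (Fintype.card (Matrix (Fin M ⊕ Fin K') (Fin L) 𝔽))
      = Fintype.card 𝔽 ^ (L * (M + K')) by
    rw [card_mat]; simp]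
  rw [show (Fintype.card (Matrix (Fin M) (Fin L) 𝔽))
      = Fintype.card 𝔽 ^ (L * M) by rw [card_mat]; simp]
  rw [Nat.cast_pow, Nat.cast_pow, Real.log_pow, Real.log_pow]
  push_cast
  ring


end SecAgg
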